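/- Let a,b,c,a',b',c' > 0 with ab − c > 0 and a'b' − c' > 0. With T and τ as before, the restriction of τ to T is a homeomorphism from T (with subspace topology of ℝ²) onto ℝ_{>0}²; its inverse sends (A,B) to (R,S) where S = b'/b + (−μ + √(μ² + 4(ab−c)a'b'c(A+B)))/(2(ab−c)a'b) with μ = abc' − a'b'c + (ab−c)A − cB, and R is determined by R = ((ab−c)a'b·S + (−aa'bb' + a'b'c + abc' + (ab−c)A − cB))/(ab'c). -/

import Mathlib

noncomputable def sInv8 (a b c a' b' c' : ℝ) (q : ℝ × ℝ) : ℝ :=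
  b' / b +
    (-(a * b * c' - a' * b' * c + (a * b - c) * q.1 - c * q.2)
      + Real.sqrt ((a * b * c' - a' * b' * c + (a * b - c) * q.1 - c * q.2) ^ 2
          + 4 * (a * b - c) * a' * b' * c * (q.1 + q.2)))
      / (2 * (a * b - c) * a' * b)

noncomputable def rInv8 (a b c a' b' c' : ℝ) (q : ℝ × ℝ) : ℝ :=
  ((a * b - c) * a' * b * sInv8 a b c a' b' c' q
      + (-(a * a' * b * b') + a' * b' * c + a * b * c'
          + (a * b - c) * q.1 - c * q.2)) / (a * b' * c)

noncomputable def tauF8 (a b c a' b' c' : ℝ) (p : ℝ × ℝ) : ℝ × ℝ :=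
  ((p.1 * c - a' * b) * p.2 + a' * b' - c', p.1 * (p.2 * (a * b - c) - a * b') + c')

noncomputable def tauI8 (a b c a' b' c' : ℝ) (q : ℝ × ℝ) : ℝ × ℝ :=
  (rInv8 a b c a' b' c' q, sInv8 a b c a' b' c' q)

lemma keyAlg8 (a b c a' b' c' A B s : ℝ)
    (ha : a ≠ 0) (hb : b ≠ 0) (hc : c ≠ 0) (hD : a * b - c ≠ 0)
    (ha' : a' ≠ 0) (hb' : b' ≠ 0) (S R : ℝ)
    (hS : S = b' / b +
      (-(a * b * c' - a' * b' * c + (a * b - c) * A - c * B) + s)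
        / (2 * (a * b - c) * a' * b))
    (hR : R = ((a * b - c) * a' * b * S
      + (-(a * a' * b * b') + a' * b' * c + a * b * c'
          + (a * b - c) * A - c * B)) / (a * b' * c)) :
    S * b - b' = (s - (a * b * c' - a' * b' * c + (a * b - c) * A - c * B))
        / (2 * ((a * b - c) * a')) ∧
    R * a - a' = (s + (a * b * c' - a' * b' * c + (a * b - c) * A - c * B))
        / (2 * (b' * c)) ∧
    ((R * c - a' * b) * S + a' * b' - c') - A
      = (s ^ 2 - ((a * b * c' - a' * b' * c + (a * b - c) * A - c * B) ^ 2
          + 4 * (a * b - c) * a' * b' * c * (A + B)))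
        / (4 * ((a * b - c) * (a' * b') * (a * b))) ∧
    (R * (S * (a * b - c) - a * b') + c') - B
      = (s ^ 2 - ((a * b * c' - a' * b' * c + (a * b - c) * A - c * B) ^ 2
          + 4 * (a * b - c) * a' * b' * c * (A + B)))
        / (4 * ((a' * b') * (a * b) * c)) := by
  subst hR
  subst hS
  refine ⟨?_, ?_, ?_, ?_⟩ <;> (field_simp; ring)

lemma leftInv8 (a b c a' b' c' : ℝ)
    (ha : 0 < a) (hb : 0 < b) (hc : 0 < c) (hD : 0 < a * b - c)
    (ha' : 0 < a') (hb' : 0 < b') (p : ℝ × ℝ)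
    (h1 : p.1 * a - a' > 0) (h2 : p.2 * b - b' > 0) :
    tauI8 a b c a' b' c' (tauF8 a b c a' b' c' p) = p := by
  obtain ⟨R, S⟩ := p
  simp only at h1 h2
  have hX : 0 < (a * b - c) * a' * b * S + a * b' * c * R - a * a' * b * b' := by
    nlinarith [mul_pos (mul_pos hD ha') h2, mul_pos (mul_pos hb' hc) h1]
  have harg : (a * b * c' - a' * b' * c
        + (a * b - c) * ((R * c - a' * b) * S + a' * b' - c')
        - c * (R * (S * (a * b - c) - a * b') + c')) ^ 2
      + 4 * (a * b - c) * a' * b' * c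
        * (((R * c - a' * b) * S + a' * b' - c')
            + (R * (S * (a * b - c) - a * b') + c'))
      = ((a * b - c) * a' * b * S + a * b' * c * R - a * a' * b * b') ^ 2 := by
    ring
  simp only [tauI8, tauF8, rInv8, sInv8, harg, Real.sqrt_sq hX.le, Prod.mk.injEq]
  constructor
  · field_simp
    ring
  · have hD' : a * b - c ≠ 0 := hD.ne'
    rw [div_add_div _ _ (by positivity) (by positivity), div_eq_iff (by positivity)]
    ring

lemma rightInv8 (a b c a' b' c' : ℝ)
    (ha : 0 < a) (hb : 0 < b) (hc : 0 < c) (hD : 0 < a * b - c)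
    (ha' : 0 < a') (hb' : 0 < b') (q : ℝ × ℝ) (hA : 0 < q.1) (hB : 0 < q.2) :
    ((tauI8 a b c a' b' c' q).1 * a - a' > 0 ∧
     (tauI8 a b c a' b' c' q).2 * b - b' > 0 ∧
     ((tauI8 a b c a' b' c' q).1 * c - a' * b) * (tauI8 a b c a' b' c' q).2
        + a' * b' - c' > 0 ∧
     (tauI8 a b c a' b' c' q).1 * ((tauI8 a b c a' b' c' q).2 * (a * b - c)
        - a * b') + c' > 0) ∧
    tauF8 a b c a' b' c' (tauI8 a b c a' b' c' q) = q := by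
  obtain ⟨A, B⟩ := q
  simp only at hA hB
  set s : ℝ := Real.sqrt ((a * b * c' - a' * b' * c + (a * b - c) * A - c * B) ^ 2
      + 4 * (a * b - c) * a' * b' * c * (A + B)) with hsdef
  obtain ⟨k1, k2, k3, k4⟩ := keyAlg8 a b c a' b' c' A B s
    ha.ne' hb.ne' hc.ne' hD.ne' ha'.ne' hb'.ne'
    (sInv8 a b c a' b' c' (A, B)) (rInv8 a b c a' b' c' (A, B)) rfl rfl
  have hΔnn : 0 ≤ (a * b * c' - a' * b' * c + (a * b - c) * A - c * B) ^ 2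
      + 4 * (a * b - c) * a' * b' * c * (A + B) := by positivity
  have hs2 : s ^ 2 = (a * b * c' - a' * b' * c + (a * b - c) * A - c * B) ^ 2
      + 4 * (a * b - c) * a' * b' * c * (A + B) := Real.sq_sqrt hΔnn
  have hs0 : 0 ≤ s := Real.sqrt_nonneg _
  have hk : 0 < 4 * (a * b - c) * a' * b' * c * (A + B) := by positivity
  have hsm : 0 < s - (a * b * c' - a' * b' * c + (a * b - c) * A - c * B) := by
    nlinarith [sq_nonneg (s + (a * b * c' - a' * b' * c + (a * b - c) * A - c * B))]
  have hsp : 0 < s + (a * b * c' - a' * b' * c + (a * b - c) * A - c * B) := by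
    nlinarith [sq_nonneg (s - (a * b * c' - a' * b' * c + (a * b - c) * A - c * B))]
  rw [hs2, sub_self, zero_div] at k3 k4
  have hAeq : ((rInv8 a b c a' b' c' (A, B)) * c - a' * b) * sInv8 a b c a' b' c' (A, B)
      + a' * b' - c' = A := by linarith
  have hBeq : (rInv8 a b c a' b' c' (A, B)) * (sInv8 a b c a' b' c' (A, B) * (a * b - c)
      - a * b') + c' = B := by linarith
  refine ⟨⟨?_, ?_, ?_, ?_⟩, ?_⟩
  · show rInv8 a b c a' b' c' (A, B) * a - a' > 0
    rw [k2]
    exact div_pos hsp (by positivity)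
  · show sInv8 a b c a' b' c' (A, B) * b - b' > 0
    rw [k1]
    exact div_pos hsm (by positivity)
  · show _ > 0
    rw [show ((tauI8 a b c a' b' c' (A, B)).1 * c - a' * b) * (tauI8 a b c a' b' c' (A, B)).2
        + a' * b' - c' = ((rInv8 a b c a' b' c' (A, B)) * c - a' * b) * sInv8 a b c a' b' c' (A, B)
        + a' * b' - c' from rfl, hAeq]
    exact hA
  · show _ > 0
    rw [show (tauI8 a b c a' b' c' (A, B)).1 * ((tauI8 a b c a' b' c' (A, B)).2 * (a * b - c)
        - a * b') + c' = (rInv8 a b c a' b' c' (A, B)) * (sInv8 a b c a' b' c' (A, B) * (a * b - c)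
        - a * b') + c' from rfl, hBeq]
    exact hB
  · simp only [tauF8, tauI8]
    exact Prod.ext hAeq hBeq

/-- The restriction of `τ` to `T` is a homeomorphism onto `ℝ_{>0}²`, with the
explicitly described inverse. -/
theorem stmt8 (a b c a' b' c' : ℝ)
    (ha : 0 < a) (hb : 0 < b) (hc : 0 < c) (habc : 0 < a * b - c)
    (ha' : 0 < a') (hb' : 0 < b') (hc' : 0 < c') (habc' : 0 < a' * b' - c') :
    ∃ h : {p : ℝ × ℝ // p.1 * a - a' > 0 ∧ p.2 * b - b' > 0 ∧
        (p.1 * c - a' * b) * p.2 + a' * b' - c' > 0 ∧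
        p.1 * (p.2 * (a * b - c) - a * b') + c' > 0} ≃ₜ
          {q : ℝ × ℝ // 0 < q.1 ∧ 0 < q.2},
      (∀ p, (h p : ℝ × ℝ)
          = (((p : ℝ × ℝ).1 * c - a' * b) * (p : ℝ × ℝ).2 + a' * b' - c',
             (p : ℝ × ℝ).1 * ((p : ℝ × ℝ).2 * (a * b - c) - a * b') + c')) ∧
      (∀ q : {q : ℝ × ℝ // 0 < q.1 ∧ 0 < q.2},
        ((h.symm q : ℝ × ℝ).2
            = b' / b +
              (-(a * b * c' - a' * b' * c + (a * b - c) * (q : ℝ × ℝ).1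
                  - c * (q : ℝ × ℝ).2)
                + Real.sqrt ((a * b * c' - a' * b' * c + (a * b - c) * (q : ℝ × ℝ).1
                    - c * (q : ℝ × ℝ).2) ^ 2
                  + 4 * (a * b - c) * a' * b' * c * ((q : ℝ × ℝ).1 + (q : ℝ × ℝ).2)))
                / (2 * (a * b - c) * a' * b)) ∧
          ((h.symm q : ℝ × ℝ).1
            = ((a * b - c) * a' * b * (h.symm q : ℝ × ℝ).2
                + (-(a * a' * b * b') + a' * b' * c + a * b * c'
                    + (a * b - c) * (q : ℝ × ℝ).1 - c * (q : ℝ × ℝ).2))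
                / (a * b' * c))) := by
  have contS : Continuous (sInv8 a b c a' b' c') := by
    unfold sInv8
    fun_prop
  have contI : Continuous (tauI8 a b c a' b' c') := by
    unfold tauI8 rInv8
    fun_prop
  have contF : Continuous (tauF8 a b c a' b' c') := by
    unfold tauF8
    fun_prop
  refine ⟨Homeomorph.mk
    ⟨fun p => ⟨tauF8 a b c a' b' c' p.1, p.2.2.2.1, p.2.2.2.2⟩,
     fun q => ⟨tauI8 a b c a' b' c' q.1,
        (rightInv8 a b c a' b' c' ha hb hc habc ha' hb' q.1 q.2.1 q.2.2).1⟩,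
     fun p => Subtype.ext (leftInv8 a b c a' b' c' ha hb hc habc ha' hb' p.1 p.2.1 p.2.2.1),
     fun q => Subtype.ext
        (rightInv8 a b c a' b' c' ha hb hc habc ha' hb' q.1 q.2.1 q.2.2).2⟩
    (Continuous.subtype_mk (contF.comp continuous_subtype_val) _)
    (Continuous.subtype_mk (contI.comp continuous_subtype_val) _),
    fun p => rfl, fun q => ⟨rfl, rfl⟩⟩
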